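/- The operator Q = (1/4)(|000⟩⟨000| + |111⟩⟨111| + |+++⟩⟨+++| + |−−−⟩⟨−−−|) on (ℂ²)^{⊗3} has operator norm ‖Q‖ = 3/8. -/

import Mathlib

open Matrix Polynomial
open scoped Matrix.Norms.L2Operator

/-- `|0⟩, |1⟩, |+⟩, |−⟩` in ℂ². -/
noncomputable def st : Fin 4 → (Fin 2 → ℂ)
  | 0 => ![1, 0]
  | 1 => ![0, 1]
  | 2 => ![(Real.sqrt 2 : ℂ)⁻¹, (Real.sqrt 2 : ℂ)⁻¹]
  | 3 => ![(Real.sqrt 2 : ℂ)⁻¹, -(Real.sqrt 2 : ℂ)⁻¹]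

/-- The triple tensor product `|aaa⟩ = |a⟩⊗|a⟩⊗|a⟩` of a qubit state with itself. -/
noncomputable def triple (u : Fin 2 → ℂ) : Fin 2 × Fin 2 × Fin 2 → ℂ :=
  fun p => u p.1 * u p.2.1 * u p.2.2

/-- `16 Q` as an integer matrix. -/
def MZ : Matrix (Fin 2 × Fin 2 × Fin 2) (Fin 2 × Fin 2 × Fin 2) ℤ := fun i j =>
  (if i.1 + i.2.1 + i.2.2 = j.1 + j.2.1 + j.2.2 then 1 else 0)
    + (if i = j ∧ i.1 = i.2.1 ∧ i.2.1 = i.2.2 then 4 else 0)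

noncomputable def MC : Matrix (Fin 2 × Fin 2 × Fin 2) (Fin 2 × Fin 2 × Fin 2) ℂ :=
  MZ.map (Int.cast : ℤ → ℂ)

noncomputable def Qe : Matrix (Fin 2 × Fin 2 × Fin 2) (Fin 2 × Fin 2 × Fin 2) ℂ :=
  (1/16 : ℂ) • MC

lemma sqrt2_pow6 : ((Real.sqrt 2 : ℝ) : ℂ) ^ 6 = 8 := by
  have h : (Real.sqrt 2 : ℝ) ^ 6 = 8 := by
    have h2 := Real.mul_self_sqrt (by norm_num : (0:ℝ) ≤ 2)
    calc (Real.sqrt 2) ^ 6 = (Real.sqrt 2 * Real.sqrt 2) ^ 3 := by ring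
    _ = 8 := by rw [h2]; norm_num
  calc ((Real.sqrt 2 : ℝ) : ℂ) ^ 6 = ((Real.sqrt 2 ^ 6 : ℝ) : ℂ) := by push_cast; ring
  _ = 8 := by rw [h]; norm_num

set_option maxHeartbeats 4000000 in
lemma Q_eq : ((1 / 4 : ℂ) • ∑ k : Fin 4,
    vecMulVec (triple (st k)) (star (triple (st k)))) = Qe := by
  ext ⟨a, b, c⟩ ⟨d, e, f⟩
  fin_cases a <;> fin_cases b <;> fin_cases c <;> fin_cases d <;> fin_cases e <;> fin_cases f <;>
  · simp [Fin.sum_univ_four, st, triple, vecMulVec, Qe, MC, MZ, Matrix.map_apply,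
      Prod.ext_iff, apply_ite (Int.cast : ℤ → ℂ)]
    try (ring_nf; rw [inv_pow, sqrt2_pow6]; norm_num)

lemma MZcube : MZ * MZ * MZ = (8:ℤ) • (MZ * MZ) - (12:ℤ) • MZ := by decide

lemma MCcube : MC * MC * MC = (8:ℂ) • (MC * MC) - (12:ℂ) • MC := by
  ext i j
  have h' := congrArg (Int.cast : ℤ → ℂ) (congrFun (congrFun MZcube i) j)
  simp only [Matrix.sub_apply, Matrix.smul_apply, Matrix.mul_apply] at h'
  simp only [zsmul_eq_mul] at h'
  push_cast at h'
  simp only [MC, Matrix.map_apply, Matrix.mul_apply, Matrix.sub_apply, Matrix.smul_apply,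
    smul_eq_mul]
  push_cast
  linear_combination h'

lemma Qcube : Qe * Qe * Qe = (1/2 : ℂ) • (Qe * Qe) - (3/64 : ℂ) • Qe := by
  simp only [Qe, Matrix.smul_mul, Matrix.mul_smul, smul_smul, MCcube]
  rw [smul_sub]
  norm_num [smul_smul]

/-- top eigenvector over ℤ -/
def vZ : (Fin 2 × Fin 2 × Fin 2) → ℤ := fun p =>
  if p = (0,0,0) then 3 else if p.1 + p.2.1 + p.2.2 = 0 then 1 else 0

lemma MZ_vZ : MZ *ᵥ vZ = (6:ℤ) • vZ := by decide

noncomputable def vC : (Fin 2 × Fin 2 × Fin 2) → ℂ := fun p => ((vZ p : ℤ) : ℂ)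

lemma Qe_vC : Qe *ᵥ vC = (3/8 : ℂ) • vC := by
  have h : MC *ᵥ vC = (6:ℂ) • vC := by
    ext i
    have h' := congrArg (Int.cast : ℤ → ℂ) (congrFun MZ_vZ i)
    simp only [Matrix.mulVec, dotProduct, Pi.smul_apply, smul_eq_mul,
      zsmul_eq_mul] at h' ⊢
    push_cast at h'
    simpa [MC, vC, Matrix.map_apply] using h'
  simp only [Qe, Matrix.smul_mulVec, h, smul_smul]
  norm_num

lemma MZ_symm : ∀ i j, MZ j i = MZ i j := by
  intro i; fin_cases i <;> decide

lemma Qe_sa : IsSelfAdjoint Qe := by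
  show Qeᴴ = Qe
  ext i j
  simp [Qe, MC, conjTranspose_apply, Matrix.map_apply, MZ_symm i j]

lemma mem38 : (3/8 : ℂ) ∈ spectrum ℂ Qe := by
  rw [spectrum.mem_iff]
  intro hu
  obtain ⟨u, hu⟩ := hu
  have halg : (algebraMap ℂ (Matrix (Fin 2 × Fin 2 × Fin 2) (Fin 2 × Fin 2 × Fin 2) ℂ) (3/8))
      *ᵥ vC = (3/8 : ℂ) • vC := by
    rw [Algebra.algebraMap_eq_smul_one, Matrix.smul_mulVec, Matrix.one_mulVec]
  have hv : ((algebraMap ℂ _ (3/8)) - Qe) *ᵥ vC = 0 := by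
    rw [Matrix.sub_mulVec, halg, Qe_vC, sub_self]
  have hz : vC = 0 := by
    calc vC = (1 : Matrix _ _ ℂ) *ᵥ vC := (Matrix.one_mulVec vC).symm
    _ = ((↑u⁻¹ : Matrix _ _ ℂ) * ((algebraMap ℂ _ (3/8)) - Qe)) *ᵥ vC := by
        rw [← hu, Units.inv_mul]
    _ = (↑u⁻¹ : Matrix _ _ ℂ) *ᵥ (((algebraMap ℂ _ (3/8)) - Qe) *ᵥ vC) :=
        (Matrix.mulVec_mulVec _ _ _).symm
    _ = 0 := by rw [hv, Matrix.mulVec_zero]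
  have h3 := congrFun hz (0,0,0)
  simp [vC, vZ] at h3

lemma spec_elems : ∀ z ∈ spectrum ℂ Qe, z = 0 ∨ z = 1/8 ∨ z = 3/8 := by
  intro z hz
  have hp : (Polynomial.aeval Qe) (X^3 - C (1/2 : ℂ) * X^2 + C (3/64 : ℂ) * X) = 0 := by
    simp only [map_add, map_sub, _root_.map_mul, Polynomial.aeval_X_pow, Polynomial.aeval_C,
      Polynomial.aeval_X]
    rw [← Algebra.smul_def, ← Algebra.smul_def]
    rw [pow_succ, sq, Qcube]
    abel
  have h := spectrum.subset_polynomial_aeval Qe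
    (X^3 - C (1/2 : ℂ) * X^2 + C (3/64 : ℂ) * X) ⟨z, hz, rfl⟩
  rw [hp, spectrum.zero_eq] at h
  simp only [Polynomial.eval_add, Polynomial.eval_sub, Polynomial.eval_mul, Polynomial.eval_pow,
    Polynomial.eval_C, Polynomial.eval_X, Set.mem_singleton_iff] at h
  have hfac : z * (z - 1/8) * (z - 3/8) = 0 := by linear_combination h
  rcases mul_eq_zero.mp hfac with h1 | h1
  · rcases mul_eq_zero.mp h1 with h2 | h2
    · exact Or.inl h2
    · exact Or.inr (Or.inl (sub_eq_zero.mp h2))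
  · refine Or.inr (Or.inr (sub_eq_zero.mp h1))

theorem Qe_norm : ‖Qe‖ = 3/8 := by
  letI : CompleteSpace (Matrix (Fin 2 × Fin 2 × Fin 2) (Fin 2 × Fin 2 × Fin 2) ℂ) :=
    FiniteDimensional.complete ℂ _
  letI : CStarAlgebra (Matrix (Fin 2 × Fin 2 × Fin 2) (Fin 2 × Fin 2 × Fin 2) ℂ) := { }
  have hr := Qe_sa.spectralRadius_eq_nnnorm
  have h38 : ‖((3:ℂ)/8)‖₊ = (3/8 : NNReal) := by
    ext
    rw [coe_nnnorm, _root_.norm_div]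
    push_cast
    norm_num
  have hupper : spectralRadius ℂ Qe ≤ ((3/8 : NNReal) : ENNReal) := by
    rw [spectralRadius]
    refine iSup₂_le fun k hk => ?_
    rcases spec_elems k hk with rfl | rfl | rfl
    · simp
    · refine ENNReal.coe_le_coe.mpr ?_
      have h18 : ‖((1:ℂ)/8)‖₊ = (1/8 : NNReal) := by
        ext
        rw [coe_nnnorm, _root_.norm_div]
        push_cast
        norm_num
      rw [h18, ← NNReal.coe_le_coe]
      push_cast
      norm_num
    · rw [show ((3:ℂ)/8) = 3/8 by norm_num, h38]
  have hlower : ((3/8 : NNReal) : ENNReal) ≤ spectralRadius ℂ Qe := by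
    have := le_iSup₂ (f := fun (k : ℂ) (_ : k ∈ spectrum ℂ Qe) => (‖k‖₊ : ENNReal))
      ((3:ℂ)/8) (by rw [show ((3:ℂ)/8) = 3/8 by norm_num]; exact mem38)
    rw [h38] at this
    exact this
  have hnn : ‖Qe‖₊ = (3/8 : NNReal) := by
    have h := le_antisymm hupper hlower
    rw [hr] at h
    exact_mod_cast h.symm.symm
  have : ‖Qe‖ = ((3/8 : NNReal) : ℝ) := by rw [← coe_nnnorm, hnn]
  rw [this]
  norm_num


/-- The operator `Q = (1/4)(|000⟩⟨000| + |111⟩⟨111| + |+++⟩⟨+++| + |−−−⟩⟨−−−|)`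
on `(ℂ²)^{⊗3}` has (ℓ²) operator norm `‖Q‖ = 3/8`. -/
theorem wiesner_Q_norm :
    ‖(1 / 4 : ℂ) • ∑ k : Fin 4,
        vecMulVec (triple (st k)) (star (triple (st k)))‖ = 3 / 8 := by
  rw [Q_eq]
  exact Qe_norm
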